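/- Let A be an m×m positive semidefinite Hermitian matrix. Then for all subsets I, J of {1,...,m}: tr(A[I] log A[I]) + tr(A[J] log A[J]) ≤ tr(A[I∪J] log A[I∪J]) + tr(A[I∩J] log A[I∩J]), where for a positive semidefinite matrix B with eigenvalues λᵢ, tr(B log B) := Σᵢ λᵢ log λᵢ with the convention 0 log 0 = 0. -/

import Mathlib

open Matrix
open scoped ComplexOrder

/-- The principal submatrix of `A` with rows and columns in `I`. -/
def psub {m : ℕ} (A : Matrix (Fin m) (Fin m) ℂ) (I : Finset (Fin m)) :
    Matrix I I ℂ :=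
  A.submatrix (fun i : I => (i : Fin m)) (fun i : I => (i : Fin m))

/-- `trF f M = tr f(M)` for a Hermitian matrix `M`: the sum of `f` applied to the
eigenvalues of `M` (junk value `0` if `M` is not Hermitian). -/
noncomputable def trF {n : Type*} [Fintype n] [DecidableEq n]
    (f : ℝ → ℝ) (M : Matrix n n ℂ) : ℝ :=
  if h : M.IsHermitian then ∑ i, f (h.eigenvalues i) else 0

set_option linter.unusedSectionVars false
set_option linter.unusedVariables false



open Real MeasureTheory Set Filter Polynomial
open scoped Topology

noncomputable section SupermodAux

/-- integrand -/
def gfun (c s : ℝ) : ℝ := (c - 1)/(1 + s) + Real.log (1 + s) - Real.log (c + s)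

/-- antiderivative -/
def Afun (c s : ℝ) : ℝ :=
  (c - 1) * Real.log (1 + s) + (1 + s) * Real.log (1 + s) - (1 + s)
    - ((c + s) * Real.log (c + s) - (c + s))

lemma gfun_nonneg {c s : ℝ} (hc : 0 ≤ c) (hs : 0 < s) : 0 ≤ gfun c s := by
  have h1 : (0:ℝ) < 1 + s := by linarith
  have h2 : (0:ℝ) < c + s := by linarith
  have key := Real.log_le_sub_one_of_pos (div_pos h2 h1)
  rw [Real.log_div (ne_of_gt h2) (ne_of_gt h1)] at key
  have : (c + s) / (1 + s) - 1 = (c - 1) / (1 + s) := by field_simp; ring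
  rw [this] at key
  unfold gfun
  linarith

lemma Afun_hasDeriv {c s : ℝ} (hc : 0 ≤ c) (hs : 0 < s) :
    HasDerivAt (Afun c) (gfun c s) s := by
  have h1 : (0:ℝ) < 1 + s := by linarith
  have h2 : (0:ℝ) < c + s := by linarith
  have d1 : HasDerivAt (fun s : ℝ => 1 + s) 1 s := by
    simpa using (hasDerivAt_id s).const_add 1
  have d2 : HasDerivAt (fun s : ℝ => c + s) 1 s := by
    simpa using (hasDerivAt_id s).const_add c
  have dl1 : HasDerivAt (fun s : ℝ => Real.log (1 + s)) (1/(1+s)) s := by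
    simpa using d1.log (ne_of_gt h1)
  have dl2 : HasDerivAt (fun s : ℝ => Real.log (c + s)) (1/(c+s)) s := by
    simpa using d2.log (ne_of_gt h2)
  have dA : HasDerivAt (Afun c)
      ((c-1) * (1/(1+s)) + (1 * Real.log (1+s) + (1+s) * (1/(1+s))) - 1
        - ((1 * Real.log (c+s) + (c+s) * (1/(c+s))) - 1)) s := by
    exact ((((dl1.const_mul (c-1)).add (d1.mul dl1)).sub d1).sub ((d2.mul dl2).sub d2))
  convert dA using 1
  unfold gfun
  field_simp
  ring

lemma Afun_tendsto (c : ℝ) (hc : 0 ≤ c) : Tendsto (Afun c) atTop (𝓝 0) := by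
  have hrw : Afun c =ᶠ[atTop] fun s => (c - 1) * Real.log (1 + 1/s) + ((s * Real.log (1 + 1/s)) + Real.log (1 + 1/s))
        - ((s * Real.log (1 + c/s)) + c * Real.log (1 + c/s)) + (c - 1) := by
    filter_upwards [eventually_gt_atTop (0:ℝ)] with s hs
    have h1 : (0:ℝ) < 1 + s := by linarith
    have h2 : (0:ℝ) < c + s := by linarith
    have e1 : Real.log (1 + 1/s) = Real.log (1 + s) - Real.log s := by
      rw [← Real.log_div (ne_of_gt h1) (ne_of_gt hs)]
      congr 1
      field_simp
      ring
    have e2 : Real.log (1 + c/s) = Real.log (c + s) - Real.log s := by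
      rw [← Real.log_div (ne_of_gt h2) (ne_of_gt hs)]
      congr 1
      field_simp
      ring
    unfold Afun
    rw [e1, e2]
    ring
  have lgen : ∀ t : ℝ, Tendsto (fun s : ℝ => Real.log (1 + t/s)) atTop (𝓝 0) := by
    intro t
    have h : Tendsto (fun s : ℝ => 1 + t/s) atTop (𝓝 1) := by
      have := tendsto_inv_atTop_zero (𝕜 := ℝ)
      have h2 : Tendsto (fun s : ℝ => t/s) atTop (𝓝 0) := by
        simpa [div_eq_mul_inv] using this.const_mul t
      simpa using tendsto_const_nhds.add h2
    have hcont : ContinuousAt Real.log 1 := Real.continuousAt_log (by norm_num)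
    simpa [Function.comp_def] using (hcont.tendsto.comp h)
  have lmul : ∀ t : ℝ, Tendsto (fun s : ℝ => s * Real.log (1 + t/s)) atTop (𝓝 t) :=
    Real.tendsto_mul_log_one_add_div_atTop
  have main : Tendsto (fun s : ℝ => (c - 1) * Real.log (1 + 1/s)
      + ((s * Real.log (1 + 1/s)) + Real.log (1 + 1/s))
      - ((s * Real.log (1 + c/s)) + c * Real.log (1 + c/s)) + (c - 1)) atTop
      (𝓝 ((c-1) * 0 + (1 + 0) - (c + c * 0) + (c-1))) := by
    exact ((((lgen 1).const_mul (c-1)).add ((lmul 1).add (lgen 1))).sub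
      ((lmul c).add ((lgen c).const_mul c))).add_const (c-1)
  have : ((c-1) * 0 + (1 + 0) - (c + c * 0) + (c-1)) = 0 := by ring
  rw [this] at main
  exact main.congr' hrw.symm


lemma Afun_continuousWithin (c : ℝ) :
    ContinuousWithinAt (Afun c) (Ici 0) 0 := by
  have hl : ContinuousAt (fun s : ℝ => Real.log (1 + s)) 0 := by
    have : ContinuousAt Real.log ((fun s : ℝ => 1 + s) 0) :=
      Real.continuousAt_log (by norm_num)
    exact this.comp (by fun_prop)
  have h2 : ContinuousAt (fun s : ℝ => (c + s) * Real.log (c + s)) 0 := by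
    have := Real.continuous_mul_log.comp (by fun_prop : Continuous fun s : ℝ => c + s)
    exact this.continuousAt
  have h3 : ContinuousAt (fun s : ℝ => 1 + s) 0 := by fun_prop
  have h4 : ContinuousAt (fun s : ℝ => c + s) 0 := by fun_prop
  have hca : ContinuousAt (Afun c) 0 := by
    unfold Afun
    exact (((hl.const_mul (c-1)).add (h3.mul hl)).sub h3).sub (h2.sub h4)
  exact hca.continuousWithinAt

lemma gfun_integrableOn {c : ℝ} (hc : 0 ≤ c) : IntegrableOn (gfun c) (Ioi 0) :=
  integrableOn_Ioi_deriv_of_nonneg (Afun_continuousWithin c)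
    (fun s hs => Afun_hasDeriv hc hs) (fun s hs => gfun_nonneg hc hs) (Afun_tendsto c hc)

lemma gfun_integral {c : ℝ} (hc : 0 ≤ c) :
    ∫ s in Ioi 0, gfun c s = 1 + c * Real.log c - c := by
  rw [integral_Ioi_of_hasDerivAt_of_tendsto (Afun_continuousWithin c)
    (fun s hs => Afun_hasDeriv hc hs) (gfun_integrableOn hc) (Afun_tendsto c hc)]
  unfold Afun
  simp [Real.log_one]
  ring

end SupermodAux


open Matrix Polynomial
open scoped ComplexOrder

noncomputable section M1

variable {n : Type*} [Fintype n] [DecidableEq n]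

lemma herm_charpoly (B : Matrix n n ℂ) (hB : B.IsHermitian) :
    B.charpoly = ∏ i, (X - C ((hB.eigenvalues i : ℝ) : ℂ)) := by
  classical
  set U : Matrix n n ℂ := (hB.eigenvectorUnitary : Matrix n n ℂ) with hUdef
  set d : n → ℂ := fun i => ((hB.eigenvalues i : ℝ) : ℂ) with hddef
  have hUV : U * star U = 1 := (Matrix.mem_unitaryGroup_iff).mp hB.eigenvectorUnitary.2
  have hsp : B = U * Matrix.diagonal d * star U := by
    have := hB.spectral_theorem
    rw [Unitary.conjStarAlgAut_apply] at this
    exact this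
  have hkey : charmatrix B = U.map C * charmatrix (Matrix.diagonal d) * (star U).map C := by
    have h1 : U.map C * (Matrix.scalar n (X : ℂ[X])) * (star U).map C
        = Matrix.scalar n (X : ℂ[X]) := by
      rw [Matrix.scalar_apply, ← Matrix.smul_one_eq_diagonal, Matrix.mul_smul,
        Matrix.mul_one, Matrix.smul_mul, ← Matrix.map_mul, hUV,
        Matrix.map_one C (map_zero C) (map_one C)]
    have h3 : charmatrix (Matrix.diagonal d)
        = Matrix.scalar n (X : ℂ[X]) - (Matrix.diagonal d).map C := rfl
    have h4 : charmatrix B = Matrix.scalar n (X : ℂ[X]) - B.map C := rfl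
    rw [h3, Matrix.mul_sub, Matrix.sub_mul, h1, h4,
      ← Matrix.map_mul, ← Matrix.map_mul, ← hsp]
  rw [Matrix.charpoly, hkey]
  rw [Matrix.det_mul, Matrix.det_mul, mul_comm, ← mul_assoc, mul_comm ((star U).map C).det,
    ← Matrix.det_mul, ← Matrix.map_mul, hUV, Matrix.map_one C (map_zero C) (map_one C),
    Matrix.det_one, one_mul]
  have : charmatrix (Matrix.diagonal d) = Matrix.diagonal (fun i => (X : ℂ[X]) - C (d i)) := by
    ext i j
    by_cases h : i = j
    · subst h; simp
    · simp [h, Matrix.diagonal_apply_ne _ h]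
  rw [this, Matrix.det_diagonal]


lemma herm_roots (B : Matrix n n ℂ) (hB : B.IsHermitian) :
    B.charpoly.roots = Finset.univ.val.map (fun i => ((hB.eigenvalues i : ℝ) : ℂ)) := by
  rw [herm_charpoly B hB]
  have : ∏ i, ((X : ℂ[X]) - C ((hB.eigenvalues i : ℝ) : ℂ))
      = ((Finset.univ.val.map (fun i => ((hB.eigenvalues i : ℝ) : ℂ))).map
          (fun a => (X : ℂ[X]) - C a)).prod := by
    rw [Multiset.map_map]
    rfl
  rw [this, Polynomial.roots_multiset_prod_X_sub_C]

lemma sum_f_eigs_eq (B : Matrix n n ℂ) (hB : B.IsHermitian) (f : ℝ → ℝ) :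
    ∑ i, f (hB.eigenvalues i) = (B.charpoly.roots.map (fun z => f z.re)).sum := by
  rw [herm_roots B hB, Multiset.map_map]
  simp only [Function.comp, Complex.ofReal_re]
  rfl

section CP
variable {F : Type*} [Field F]

lemma charpoly_map_alg {γ : Type*} [Fintype γ] [DecidableEq γ]
    (φ : ℂ[X] →+* F) (M : Matrix γ γ ℂ) :
    φ M.charpoly = Matrix.det ((φ X) • (1 : Matrix γ γ F) - M.map (φ.comp C)) := by
  rw [Matrix.charpoly, RingHom.map_det]
  congr 1
  ext i j
  by_cases h : i = j
  · subst h
    simp [Matrix.charmatrix_apply_eq, Matrix.one_apply]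
  · simp [Matrix.charmatrix_apply_ne _ _ _ h, Matrix.one_apply_ne h, Matrix.smul_apply]

lemma det_xsmul_sub {γ δ : Type*} [Fintype γ] [Fintype δ] [DecidableEq γ] [DecidableEq δ]
    {x : F} (hxne : x ≠ 0) (P : Matrix γ δ F) (Q : Matrix δ γ F) :
    Matrix.det (x • (1 : Matrix γ γ F) - P * Q)
      = x ^ (Fintype.card γ) * Matrix.det (1 - (x⁻¹ • P) * Q) := by
  have : x • (1 : Matrix γ γ F) - P * Q = x • ((1 : Matrix γ γ F) - (x⁻¹ • P) * Q) := by
    rw [smul_sub, Matrix.smul_mul, smul_smul, mul_inv_cancel₀ hxne, one_smul]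
  rw [this, Matrix.det_smul]

end CP

/-- rectangular version of `charpoly (AB) = charpoly (BA)` -/
lemma charpoly_mul_comm_rect {α β : Type*} [Fintype α] [Fintype β] [DecidableEq α] [DecidableEq β]
    (Y : Matrix α β ℂ) (Z : Matrix β α ℂ) :
    (X : ℂ[X]) ^ (Fintype.card β) * (Y * Z).charpoly
      = (X : ℂ[X]) ^ (Fintype.card α) * (Z * Y).charpoly := by
  classical
  set F := FractionRing ℂ[X]
  have hinj : Function.Injective (algebraMap ℂ[X] F) := IsFractionRing.injective ℂ[X] F
  apply hinj
  set φ : ℂ[X] →+* F := (algebraMap ℂ[X] F : ℂ[X] →+* F) with hφ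
  set ψ : ℂ →+* F := φ.comp (C : ℂ →+* ℂ[X]) with hψ
  have hxne : φ X ≠ 0 := by
    intro h
    exact Polynomial.X_ne_zero (hinj (h.trans (map_zero φ).symm))
  rw [_root_.map_mul, _root_.map_mul, map_pow, map_pow, charpoly_map_alg φ (Y * Z),
    charpoly_map_alg φ (Z * Y), Matrix.map_mul, Matrix.map_mul]
  rw [det_xsmul_sub hxne (Y.map ⇑ψ) (Z.map ⇑ψ), det_xsmul_sub hxne (Z.map ⇑ψ) (Y.map ⇑ψ),
    Matrix.det_one_sub_mul_comm]
  have : Z.map ψ * ((φ X)⁻¹ • Y.map ψ) = ((φ X)⁻¹ • Z.map ψ) * Y.map ψ := by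
    rw [Matrix.mul_smul, Matrix.smul_mul]
  rw [this]
  ring

end M1


open Matrix Polynomial
open scoped ComplexOrder

noncomputable section M2

variable {n : Type*} [Fintype n] [DecidableEq n]

/-- rank-one matrix `v vᴴ` -/
def rk1 (v : n → ℂ) : Matrix n n ℂ := Matrix.replicateCol (Fin 1) v * Matrix.replicateRow (Fin 1) (star v)

lemma rk1_posSemidef (v : n → ℂ) : (rk1 v).PosSemidef := by
  have : rk1 v = Matrix.replicateCol (Fin 1) v * (Matrix.replicateCol (Fin 1) v)ᴴ := by
    rw [Matrix.conjTranspose_replicateCol]; rfl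
  rw [this]
  exact Matrix.posSemidef_self_mul_conjTranspose _

lemma rk1_apply (v : n → ℂ) (i j : n) : rk1 v i j = v i * (starRingEnd ℂ) (v j) := by
  simp [rk1, Matrix.mul_apply, Matrix.replicateCol, Matrix.replicateRow, Pi.star_apply, RCLike.star_def]

lemma posdef_add_smul_one {M : Matrix n n ℂ} (hM : M.PosSemidef) {s : ℝ} (hs : 0 < s) :
    (M + (s : ℂ) • 1).PosDef := by
  have hdiag : ((s : ℂ) • (1 : Matrix n n ℂ)).PosDef := by
    rw [Matrix.smul_one_eq_diagonal]
    exact Matrix.posDef_diagonal_iff.mpr (fun _ => Complex.zero_lt_real.mpr hs)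
  exact Matrix.PosDef.posSemidef_add hM hdiag

lemma det_add_smul_one {B : Matrix n n ℂ} (hB : B.IsHermitian) (s : ℝ) :
    (B + (s : ℂ) • 1).det = ((∏ i, (hB.eigenvalues i + s) : ℝ) : ℂ) := by
  set U : Matrix n n ℂ := (hB.eigenvectorUnitary : Matrix n n ℂ) with hUdef
  set d : n → ℂ := fun i => ((hB.eigenvalues i : ℝ) : ℂ) with hddef
  have hUV : U * star U = 1 := (Matrix.mem_unitaryGroup_iff).mp hB.eigenvectorUnitary.2
  have hVU : star U * U = 1 := (Matrix.mem_unitaryGroup_iff').mp hB.eigenvectorUnitary.2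
  have hsp : B = U * Matrix.diagonal d * star U := by
    have := hB.spectral_theorem
    rw [Unitary.conjStarAlgAut_apply] at this
    exact this
  have key : B + (s : ℂ) • 1 = U * (Matrix.diagonal d + (s:ℂ) • 1) * star U := by
    rw [Matrix.mul_add, Matrix.add_mul, ← hsp, Matrix.mul_smul, Matrix.mul_one,
      Matrix.smul_mul, hUV]
  rw [key, Matrix.det_mul, Matrix.det_mul, mul_comm, ← mul_assoc, mul_comm (Matrix.det (star U)),
    ← Matrix.det_mul, hUV, Matrix.det_one, one_mul]
  rw [Matrix.smul_one_eq_diagonal, Matrix.diagonal_add, Matrix.det_diagonal]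
  push_cast
  rfl

lemma det_rk1_lemma {M : Matrix n n ℂ} (hM : M.PosDef) (v : n → ℂ) :
    (M + rk1 v).det = M.det * (1 + dotProduct (star v) (M⁻¹ *ᵥ v)) := by
  have hdet : IsUnit M.det := (Matrix.isUnit_iff_isUnit_det M).mp hM.isUnit
  have hcol : M⁻¹ * Matrix.replicateCol (Fin 1) v = Matrix.replicateCol (Fin 1) (M⁻¹ *ᵥ v) := by
    ext i j
    simp [Matrix.mul_apply, Matrix.replicateCol, Matrix.mulVec, dotProduct]
  rw [rk1]; erw [Matrix.det_add_replicateCol_mul_replicateRow (ι := Fin 1) hdet v (star v)]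
  congr 1
  rw [Matrix.mul_assoc, hcol]
  simp [Matrix.det_unique, Matrix.add_apply, Matrix.one_apply_eq, Matrix.replicateRow_mul_replicateCol_apply]

lemma inv_quad_antitone {A B : Matrix n n ℂ} (hA : A.PosDef) (hB : B.PosDef)
    (hAB : (B - A).PosSemidef) (v : n → ℂ) :
    dotProduct (star v) (B⁻¹ *ᵥ v) ≤ dotProduct (star v) (A⁻¹ *ᵥ v) := by
  set u : n → ℂ := B⁻¹ *ᵥ v with hu
  set w : n → ℂ := A⁻¹ *ᵥ v with hw
  have hBu : B *ᵥ u = v := by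
    rw [hu, Matrix.mulVec_mulVec, Matrix.mul_nonsing_inv _ ((Matrix.isUnit_iff_isUnit_det B).mp hB.isUnit), Matrix.one_mulVec]
  have hAw : A *ᵥ w = v := by
    rw [hw, Matrix.mulVec_mulVec, Matrix.mul_nonsing_inv _ ((Matrix.isUnit_iff_isUnit_det A).mp hA.isUnit), Matrix.one_mulVec]
  -- star x ᵥ* A = star (A *ᵥ x) for hermitian A
  have hsvA : ∀ x : n → ℂ, star x ᵥ* A = star (A *ᵥ x) := by
    intro x
    rw [Matrix.star_mulVec, hA.isHermitian.eq]
  have e1 : ∀ x : n → ℂ, dotProduct (star w) (A *ᵥ x) = dotProduct (star v) x := by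
    intro x
    rw [dotProduct_mulVec, hsvA w, hAw]
  have h1 : 0 ≤ dotProduct (star (u - w)) (A *ᵥ (u - w)) := hA.posSemidef.dotProduct_mulVec_nonneg _
  have h2 : 0 ≤ dotProduct (star u) ((B - A) *ᵥ u) := hAB.dotProduct_mulVec_nonneg _
  have expand1 : dotProduct (star (u - w)) (A *ᵥ (u - w))
      = dotProduct (star u) (A *ᵥ u) - dotProduct (star u) v
        - dotProduct (star v) u + dotProduct (star v) w := by
    have hsub : star (u - w) = star u - star w := star_sub u w
    have e4 : dotProduct (star w) v = dotProduct (star v) w := by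
      conv_lhs => rw [← hAw]
      exact e1 w
    rw [Matrix.mulVec_sub, hsub, sub_dotProduct, dotProduct_sub,
      dotProduct_sub, hAw, e1 u, e4]
    ring
  have expand2 : dotProduct (star u) ((B - A) *ᵥ u)
      = dotProduct (star u) v - dotProduct (star u) (A *ᵥ u) := by
    rw [Matrix.sub_mulVec, dotProduct_sub, hBu]
  rw [expand1] at h1
  rw [expand2] at h2
  have := add_nonneg h1 h2
  have hfin : dotProduct (star u) (A *ᵥ u) - dotProduct (star u) v
        - dotProduct (star v) u + dotProduct (star v) w
        + (dotProduct (star u) v - dotProduct (star u) (A *ᵥ u))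
      = dotProduct (star v) w - dotProduct (star v) u := by ring
  rw [hfin] at this
  exact sub_nonneg.mp this

lemma sum_eigs_eq_trace {B : Matrix n n ℂ} (hB : B.IsHermitian) :
    ((∑ i, hB.eigenvalues i : ℝ) : ℂ) = B.trace := by
  set U : Matrix n n ℂ := (hB.eigenvectorUnitary : Matrix n n ℂ) with hUdef
  set d : n → ℂ := fun i => ((hB.eigenvalues i : ℝ) : ℂ) with hddef
  have hVU : star U * U = 1 := (Matrix.mem_unitaryGroup_iff').mp hB.eigenvectorUnitary.2
  have hsp : B = U * Matrix.diagonal d * star U := by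
    have := hB.spectral_theorem
    rw [Unitary.conjStarAlgAut_apply] at this
    exact this
  conv_rhs => rw [hsp]
  rw [Matrix.trace_mul_cycle, hVU, Matrix.one_mul, Matrix.trace_diagonal]
  push_cast
  rfl

end M2


noncomputable section M3
open MeasureTheory Set Matrix
open scoped ComplexOrder

variable {n : Type*} [Fintype n] [DecidableEq n]

def phifun (x : ℝ) : ℝ := x * Real.log x

lemma trsum_eq_integral {X : Matrix n n ℂ} (hX : X.PosSemidef) :
    ∑ i, phifun (hX.1.eigenvalues i)
      = (∫ s in Ioi (0:ℝ), ∑ i, gfun (hX.1.eigenvalues i) s)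
        + ∑ i, hX.1.eigenvalues i - (Fintype.card n) := by
  rw [MeasureTheory.integral_finset_sum _
    (fun i _ => gfun_integrableOn (hX.eigenvalues_nonneg i))]
  rw [Finset.sum_congr rfl (fun i _ => gfun_integral (hX.eigenvalues_nonneg i))]
  rw [Finset.sum_sub_distrib, Finset.sum_add_distrib, Finset.sum_const, Finset.card_univ,
    nsmul_eq_mul, mul_one]
  unfold phifun
  ring

lemma sum_gfun_eq (e : n → ℝ) {s : ℝ} (hs : 0 < s) (he : ∀ i, 0 ≤ e i) :
    ∑ i, gfun (e i) s = ((∑ i, e i) - Fintype.card n)/(1+s)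
      + (Fintype.card n) * Real.log (1+s) - Real.log (∏ i, (e i + s)) := by
  rw [Real.log_prod (fun i _ => ne_of_gt (by linarith [he i]))]
  unfold gfun
  rw [Finset.sum_sub_distrib, Finset.sum_add_distrib, Finset.sum_const, Finset.card_univ,
    nsmul_eq_mul, ← Finset.sum_div, Finset.sum_sub_distrib, Finset.sum_const, Finset.card_univ,
    nsmul_eq_mul, mul_one]
  try ring

lemma prod_shift_pos (e : n → ℝ) {s : ℝ} (hs : 0 < s) (he : ∀ i, 0 ≤ e i) :
    0 < ∏ i, (e i + s) :=
  Finset.prod_pos (fun i _ => by linarith [he i])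

lemma trace_sum_identity {M N : Matrix n n ℂ} (hM : M.PosSemidef) (hN : N.PosSemidef)
    (v : n → ℂ) (hMv : (M + rk1 v).PosSemidef) (hNv : (N + rk1 v).PosSemidef) :
    ∑ i, hMv.1.eigenvalues i + ∑ i, hN.1.eigenvalues i
      = ∑ i, hNv.1.eigenvalues i + ∑ i, hM.1.eigenvalues i := by
  have h1 := sum_eigs_eq_trace hMv.1
  have h2 := sum_eigs_eq_trace hN.1
  have h3 := sum_eigs_eq_trace hNv.1
  have h4 := sum_eigs_eq_trace hM.1
  have key : ((∑ i, hMv.1.eigenvalues i + ∑ i, hN.1.eigenvalues i : ℝ) : ℂ)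
      = ((∑ i, hNv.1.eigenvalues i + ∑ i, hM.1.eigenvalues i : ℝ) : ℂ) := by
    rw [Complex.ofReal_add, Complex.ofReal_add, h1, h2, h3, h4,
      Matrix.trace_add, Matrix.trace_add]
    try ring
  exact_mod_cast key

lemma det_prod_identity {M : Matrix n n ℂ} (hM : M.PosSemidef)
    (v : n → ℂ) (hMv : (M + rk1 v).PosSemidef) {s : ℝ} (hs : 0 < s) :
    ((∏ i, (hMv.1.eigenvalues i + s) : ℝ) : ℂ)
      = ((∏ i, (hM.1.eigenvalues i + s) : ℝ) : ℂ)
        * (1 + dotProduct (star v) ((M + (s:ℂ) • 1)⁻¹ *ᵥ v)) := by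
  have hre : (M + rk1 v) + (s:ℂ) • 1 = (M + (s:ℂ) • 1) + rk1 v := by abel
  rw [← det_add_smul_one hMv.1 s, ← det_add_smul_one hM.1 s, hre,
    det_rk1_lemma (posdef_add_smul_one hM hs) v]

lemma pointwise_gfun_ineq {M N : Matrix n n ℂ} (hM : M.PosSemidef) (hN : N.PosSemidef)
    (hMN : (N - M).PosSemidef) (v : n → ℂ)
    (hMv : (M + rk1 v).PosSemidef) (hNv : (N + rk1 v).PosSemidef)
    {s : ℝ} (hs : 0 < s) :
    ∑ i, gfun (hMv.1.eigenvalues i) s + ∑ i, gfun (hN.1.eigenvalues i) s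
      ≤ ∑ i, gfun (hNv.1.eigenvalues i) s + ∑ i, gfun (hM.1.eigenvalues i) s := by
  set eM := hM.1.eigenvalues
  set eN := hN.1.eigenvalues
  set eMv := hMv.1.eigenvalues
  set eNv := hNv.1.eigenvalues
  have hposM := prod_shift_pos eM hs hM.eigenvalues_nonneg
  have hposN := prod_shift_pos eN hs hN.eigenvalues_nonneg
  have hposMv := prod_shift_pos eMv hs hMv.eigenvalues_nonneg
  have hposNv := prod_shift_pos eNv hs hNv.eigenvalues_nonneg
  -- the det-ratio inequality
  have hq := inv_quad_antitone (posdef_add_smul_one hM hs) (posdef_add_smul_one hN hs)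
    (by
      have : (N + (s:ℂ) • 1) - (M + (s:ℂ) • 1) = N - M := by abel
      rw [this]
      exact hMN) v
  have hidM := det_prod_identity hM v hMv hs
  have hidN := det_prod_identity hN v hNv hs
  -- real ratios
  have hMne : ((∏ i, (eM i + s) : ℝ) : ℂ) ≠ 0 := by exact_mod_cast ne_of_gt hposM
  have hNne : ((∏ i, (eN i + s) : ℝ) : ℂ) ≠ 0 := by exact_mod_cast ne_of_gt hposN
  have hMc : (((∏ i, (eMv i + s)) / (∏ i, (eM i + s)) : ℝ) : ℂ)
      = 1 + dotProduct (star v) ((M + (s:ℂ) • 1)⁻¹ *ᵥ v) := by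
    rw [Complex.ofReal_div, div_eq_iff hMne, hidM]
    ring
  have hNc : (((∏ i, (eNv i + s)) / (∏ i, (eN i + s)) : ℝ) : ℂ)
      = 1 + dotProduct (star v) ((N + (s:ℂ) • 1)⁻¹ *ᵥ v) := by
    rw [Complex.ofReal_div, div_eq_iff hNne, hidN]
    ring
  have hratio : (∏ i, (eNv i + s)) / (∏ i, (eN i + s)) ≤ (∏ i, (eMv i + s)) / (∏ i, (eM i + s)) := by
    rw [← Complex.real_le_real, hNc, hMc]
    exact add_le_add_right hq 1
  have hprod : (∏ i, (eNv i + s)) * (∏ i, (eM i + s)) ≤ (∏ i, (eMv i + s)) * (∏ i, (eN i + s)) := by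
    rw [div_le_div_iff₀ hposN hposM] at hratio
    linarith
  have hlog : Real.log (∏ i, (eNv i + s)) + Real.log (∏ i, (eM i + s))
      ≤ Real.log (∏ i, (eMv i + s)) + Real.log (∏ i, (eN i + s)) := by
    rw [← Real.log_mul (ne_of_gt hposNv) (ne_of_gt hposM),
      ← Real.log_mul (ne_of_gt hposMv) (ne_of_gt hposN)]
    exact Real.log_le_log (by positivity) hprod
  have htr := trace_sum_identity hM hN v hMv hNv
  rw [sum_gfun_eq eM hs hM.eigenvalues_nonneg, sum_gfun_eq eN hs hN.eigenvalues_nonneg,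
    sum_gfun_eq eMv hs hMv.eigenvalues_nonneg, sum_gfun_eq eNv hs hNv.eigenvalues_nonneg]
  have hdiv : ((∑ i, eMv i) - Fintype.card n)/(1+s) + ((∑ i, eN i) - Fintype.card n)/(1+s)
      = ((∑ i, eNv i) - Fintype.card n)/(1+s) + ((∑ i, eM i) - Fintype.card n)/(1+s) := by
    rw [← add_div, ← add_div]
    congr 1
    linarith
  linarith

lemma trsum_increment {M N : Matrix n n ℂ} (hM : M.PosSemidef) (hN : N.PosSemidef)
    (hMN : (N - M).PosSemidef) (v : n → ℂ)
    (hMv : (M + rk1 v).PosSemidef) (hNv : (N + rk1 v).PosSemidef) :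
    ∑ i, phifun (hMv.1.eigenvalues i) + ∑ i, phifun (hN.1.eigenvalues i)
      ≤ ∑ i, phifun (hNv.1.eigenvalues i) + ∑ i, phifun (hM.1.eigenvalues i) := by
  have hintM : IntegrableOn (fun s => ∑ i, gfun (hM.1.eigenvalues i) s) (Ioi (0:ℝ)) :=
    MeasureTheory.integrable_finset_sum _ (fun i _ => gfun_integrableOn (hM.eigenvalues_nonneg i))
  have hintN : IntegrableOn (fun s => ∑ i, gfun (hN.1.eigenvalues i) s) (Ioi (0:ℝ)) :=
    MeasureTheory.integrable_finset_sum _ (fun i _ => gfun_integrableOn (hN.eigenvalues_nonneg i))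
  have hintMv : IntegrableOn (fun s => ∑ i, gfun (hMv.1.eigenvalues i) s) (Ioi (0:ℝ)) :=
    MeasureTheory.integrable_finset_sum _ (fun i _ => gfun_integrableOn (hMv.eigenvalues_nonneg i))
  have hintNv : IntegrableOn (fun s => ∑ i, gfun (hNv.1.eigenvalues i) s) (Ioi (0:ℝ)) :=
    MeasureTheory.integrable_finset_sum _ (fun i _ => gfun_integrableOn (hNv.eigenvalues_nonneg i))
  have hmono : (∫ s in Ioi (0:ℝ), ∑ i, gfun (hMv.1.eigenvalues i) s)
      + (∫ s in Ioi (0:ℝ), ∑ i, gfun (hN.1.eigenvalues i) s)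
      ≤ (∫ s in Ioi (0:ℝ), ∑ i, gfun (hNv.1.eigenvalues i) s)
      + (∫ s in Ioi (0:ℝ), ∑ i, gfun (hM.1.eigenvalues i) s) := by
    rw [← MeasureTheory.integral_add hintMv hintN, ← MeasureTheory.integral_add hintNv hintM]
    apply MeasureTheory.setIntegral_mono_on (hintMv.add hintN) (hintNv.add hintM)
      measurableSet_Ioi
    intro s hs
    exact pointwise_gfun_ineq hM hN hMN v hMv hNv hs
  have htr := trace_sum_identity hM hN v hMv hNv
  rw [trsum_eq_integral hMv, trsum_eq_integral hN, trsum_eq_integral hNv, trsum_eq_integral hM]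
  linarith

end M3


noncomputable section M4
open Matrix Polynomial MeasureTheory Set
open scoped ComplexOrder

lemma trF_of_isHermitian {n : Type*} [Fintype n] [DecidableEq n] {B : Matrix n n ℂ}
    (h : B.IsHermitian) (f : ℝ → ℝ) : trF f B = ∑ i, f (h.eigenvalues i) := dif_pos h

lemma trF_transfer {α β : Type*} [Fintype α] [Fintype β] [DecidableEq α] [DecidableEq β]
    {B : Matrix α α ℂ} {D : Matrix β β ℂ} (hB : B.IsHermitian) (hD : D.IsHermitian)
    {f : ℝ → ℝ} (hf : f 0 = 0) {k k' : ℕ}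
    (h : (X : ℂ[X])^k * B.charpoly = (X : ℂ[X])^k' * D.charpoly) :
    trF f B = trF f D := by
  rw [trF_of_isHermitian hB f, trF_of_isHermitian hD f,
    sum_f_eigs_eq B hB f, sum_f_eigs_eq D hD f]
  have hBroots : ((X : ℂ[X])^k * B.charpoly).roots
      = Multiset.replicate k 0 + B.charpoly.roots := by
    rw [Polynomial.roots_mul
      (mul_ne_zero (pow_ne_zero _ Polynomial.X_ne_zero) B.charpoly_monic.ne_zero),
      Polynomial.roots_pow, Polynomial.roots_X, Multiset.nsmul_singleton]
  have hDroots : ((X : ℂ[X])^k' * D.charpoly).roots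
      = Multiset.replicate k' 0 + D.charpoly.roots := by
    rw [Polynomial.roots_mul
      (mul_ne_zero (pow_ne_zero _ Polynomial.X_ne_zero) D.charpoly_monic.ne_zero),
      Polynomial.roots_pow, Polynomial.roots_X, Multiset.nsmul_singleton]
  have hre : Multiset.replicate k (0:ℂ) + B.charpoly.roots
      = Multiset.replicate k' 0 + D.charpoly.roots := by
    rw [← hBroots, ← hDroots, h]
  have key := congrArg (fun mm : Multiset ℂ => ((mm.map (fun z => f z.re)).sum)) hre
  simpa [Multiset.map_replicate, Multiset.sum_replicate, Complex.zero_re, hf] using key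

variable {m : ℕ}

def colv (W : Matrix (Fin m) (Fin m) ℂ) (k : Fin m) : Fin m → ℂ := fun i => W i k

def NK (W : Matrix (Fin m) (Fin m) ℂ) (K : Finset (Fin m)) : Matrix (Fin m) (Fin m) ℂ :=
  ∑ k ∈ K, rk1 (colv W k)

lemma NK_posSemidef (W : Matrix (Fin m) (Fin m) ℂ) (K : Finset (Fin m)) :
    (NK W K).PosSemidef := by
  classical
  unfold NK
  refine Finset.sum_induction _ _ (fun a b ha hb => ha.add hb) Matrix.PosSemidef.zero
    (fun k _ => rk1_posSemidef _)

lemma NK_sdiff_posSemidef (W : Matrix (Fin m) (Fin m) ℂ) {K L : Finset (Fin m)} (h : K ⊆ L) :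
    (NK W L - NK W K).PosSemidef := by
  have : NK W L - NK W K = NK W (L \ K) := by
    unfold NK
    rw [← Finset.sum_sdiff h]
    abel
  rw [this]
  exact NK_posSemidef W _

lemma NK_insert (W : Matrix (Fin m) (Fin m) ℂ) {K : Finset (Fin m)} {a : Fin m} (ha : a ∉ K) :
    NK W (insert a K) = NK W K + rk1 (colv W a) := by
  unfold NK
  rw [Finset.sum_insert ha]
  abel

/-- the rectangular factor -/
def Ymat (W : Matrix (Fin m) (Fin m) ℂ) (K : Finset (Fin m)) : Matrix (Fin m) K ℂ :=
  W.submatrix id (fun k : K => (k : Fin m))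

lemma NK_eq_mul (W : Matrix (Fin m) (Fin m) ℂ) (K : Finset (Fin m)) :
    NK W K = Ymat W K * (Ymat W K)ᴴ := by
  ext i j
  unfold NK
  rw [Matrix.mul_apply, Matrix.sum_apply, ← Finset.sum_coe_sort K]
  apply Finset.sum_congr rfl
  intro k _
  rw [rk1_apply, Matrix.conjTranspose_apply]
  unfold Ymat colv
  rw [Matrix.submatrix_apply, Matrix.submatrix_apply]
  rfl

lemma psub_eq_mul {A : Matrix (Fin m) (Fin m) ℂ} {W : Matrix (Fin m) (Fin m) ℂ}
    (hWh : W.IsHermitian) (hWA : W * W = A) (K : Finset (Fin m)) :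
    psub A K = (Ymat W K)ᴴ * Ymat W K := by
  ext i j
  rw [Matrix.mul_apply]
  unfold psub Ymat
  rw [Matrix.submatrix_apply, ← hWA, Matrix.mul_apply]
  apply Finset.sum_congr rfl
  intro p _
  rw [Matrix.conjTranspose_apply, Matrix.submatrix_apply, Matrix.submatrix_apply]
  congr 1
  exact (hWh.apply (↑i) p).symm

lemma trF_psub_NK {A W : Matrix (Fin m) (Fin m) ℂ} (hWh : W.IsHermitian) (hWA : W * W = A)
    {f : ℝ → ℝ} (hf : f 0 = 0) (K : Finset (Fin m)) :
    trF f (psub A K) = trF f (NK W K) := by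
  have hcp := charpoly_mul_comm_rect (Ymat W K) (Ymat W K)ᴴ
  have hBh : (NK W K).IsHermitian := (NK_posSemidef W K).1
  have hDh : (psub A K).IsHermitian := by
    rw [psub_eq_mul hWh hWA K]
    exact (Matrix.posSemidef_conjTranspose_mul_self _).1
  have h : (X : ℂ[X])^(Fintype.card {x // x ∈ K}) * (NK W K).charpoly
      = (X : ℂ[X])^(Fintype.card (Fin m)) * (psub A K).charpoly := by
    rw [NK_eq_mul W K, psub_eq_mul hWh hWA K]
    exact hcp
  exact (trF_transfer hBh hDh hf h).symm

lemma trF_increment {M N : Matrix (Fin m) (Fin m) ℂ} (hM : M.PosSemidef) (hN : N.PosSemidef)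
    (hMN : (N - M).PosSemidef) (v : Fin m → ℂ) :
    trF (fun x => x * Real.log x) (M + rk1 v) + trF (fun x => x * Real.log x) N
      ≤ trF (fun x => x * Real.log x) (N + rk1 v) + trF (fun x => x * Real.log x) M := by
  have hMv : (M + rk1 v).PosSemidef := hM.add (rk1_posSemidef v)
  have hNv : (N + rk1 v).PosSemidef := hN.add (rk1_posSemidef v)
  rw [trF_of_isHermitian hMv.1, trF_of_isHermitian hNv.1, trF_of_isHermitian hM.1,
    trF_of_isHermitian hN.1]
  exact trsum_increment hM hN hMN v hMv hNv

lemma G_super (W : Matrix (Fin m) (Fin m) ℂ) :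
    ∀ (p : ℕ) (K L : Finset (Fin m)), (K \ L).card = p →
      trF (fun x => x * Real.log x) (NK W K) + trF (fun x => x * Real.log x) (NK W L)
        ≤ trF (fun x => x * Real.log x) (NK W (K ∪ L))
          + trF (fun x => x * Real.log x) (NK W (K ∩ L)) := by
  intro p
  induction p using Nat.strong_induction_on with
  | _ p ih =>
    intro K L hcard
    by_cases hsub : K ⊆ L
    · rw [Finset.union_eq_right.mpr hsub, Finset.inter_eq_left.mpr hsub]
      linarith
    · obtain ⟨a, haK, haL⟩ := Finset.not_subset.mp hsub
      set K' := K.erase a with hK'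
      have hKa : K = insert a K' := (Finset.insert_erase haK).symm
      have haK' : a ∉ K' := Finset.notMem_erase a K
      have haKL' : a ∉ K' ∪ L := by
        simp [Finset.mem_union, haK', haL]
      have hsubKL : K' ⊆ K' ∪ L := Finset.subset_union_left
      have hinc : trF (fun x => x * Real.log x) (NK W K)
            + trF (fun x => x * Real.log x) (NK W (K' ∪ L))
          ≤ trF (fun x => x * Real.log x) (NK W (K ∪ L))
            + trF (fun x => x * Real.log x) (NK W K') := by
        have h1 : NK W K = NK W K' + rk1 (colv W a) := by
          rw [hKa, NK_insert W haK']
        have h2 : K ∪ L = insert a (K' ∪ L) := by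
          rw [hKa, Finset.insert_union]
        have h3 : NK W (K ∪ L) = NK W (K' ∪ L) + rk1 (colv W a) := by
          rw [h2, NK_insert W haKL']
        rw [h1, h3]
        exact trF_increment (NK_posSemidef W K') (NK_posSemidef W (K' ∪ L))
          (NK_sdiff_posSemidef W hsubKL) (colv W a)
      have hmem : a ∈ K \ L := Finset.mem_sdiff.mpr ⟨haK, haL⟩
      have hKL' : K' \ L = (K \ L).erase a := by
        ext x
        simp only [hK', Finset.mem_sdiff, Finset.mem_erase]
        tauto
      have hlt : (K' \ L).card < p := by
        rw [hKL', Finset.card_erase_of_mem hmem, ← hcard]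
        have : 0 < (K \ L).card := Finset.card_pos.mpr ⟨a, hmem⟩
        omega
      have hIH := ih (K' \ L).card hlt K' L rfl
      have hint : K' ∩ L = K ∩ L := by
        rw [hKa, Finset.insert_inter_of_notMem haL]
      have huni : K' ∪ L ∪ ∅ = K' ∪ L := by simp
      rw [hint] at hIH
      linarith

end M4


open scoped MatrixOrder in
lemma exists_herm_sqrt {m : ℕ} {A : Matrix (Fin m) (Fin m) ℂ} (hA : A.PosSemidef) :
    ∃ W : Matrix (Fin m) (Fin m) ℂ, W.IsHermitian ∧ W * W = A :=
  ⟨CFC.sqrt A, (CFC.sqrt_nonneg A).posSemidef.1, CFC.sqrt_mul_sqrt_self A hA.nonneg⟩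

/-- For a positive semidefinite Hermitian `A`, the set function
`I ↦ tr (A[I] log A[I]) = Σᵢ λᵢ log λᵢ` is supermodular.
Note `Real.log 0 = 0`, giving the convention `0 log 0 = 0`. -/
theorem trace_xlogx_principal_supermodular {m : ℕ} (A : Matrix (Fin m) (Fin m) ℂ)
    (hA : A.PosSemidef) (I J : Finset (Fin m)) :
    trF (fun x => x * Real.log x) (psub A I) + trF (fun x => x * Real.log x) (psub A J) ≤
      trF (fun x => x * Real.log x) (psub A (I ∪ J)) +
        trF (fun x => x * Real.log x) (psub A (I ∩ J)) := by
  obtain ⟨W, hWh, hW⟩ := exists_herm_sqrt hA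
  have hf : (fun x : ℝ => x * Real.log x) 0 = 0 := by simp
  rw [trF_psub_NK hWh hW hf I, trF_psub_NK hWh hW hf J, trF_psub_NK hWh hW hf (I ∪ J),
    trF_psub_NK hWh hW hf (I ∩ J)]
  exact G_super W (I \ J).card I J rfl
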